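/- Let n = p q^b, where p and q are distinct primes and b ≥ 2. Then the independence number of the prime-coprime graph of the cyclic group Z_n equals n − min{pq, q^b + p − 1}. -/

import Mathlib

/-- The prime-coprime graph: distinct vertices `g, h` are adjacent iff
`gcd (orderOf g) (orderOf h)` is `1` or a prime. -/
def primeCoprimeGraph (G : Type*) [Monoid G] : SimpleGraph G where
  Adj g h := g ≠ h ∧
    (Nat.gcd (orderOf g) (orderOf h) = 1 ∨ (Nat.gcd (orderOf g) (orderOf h)).Prime)
  symm := ⟨by
    rintro g h ⟨hne, hd⟩
    exact ⟨hne.symm, by rwa [Nat.gcd_comm]⟩⟩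
  loopless := ⟨by rintro g ⟨hne, -⟩; exact hne rfl⟩

/-- A set of vertices is independent if no two of its elements are adjacent. -/
def IsIndepSet {V : Type*} (Γ : SimpleGraph V) (s : Set V) : Prop :=
  s.Pairwise fun a b => ¬ Γ.Adj a b

open scoped Classical in
/-- The independence number of a graph on a finite vertex set. -/
noncomputable def indepNum {V : Type*} [Fintype V] (Γ : SimpleGraph V) : ℕ :=
  Finset.univ.sup fun s : Finset V => if IsIndepSet Γ (s : Set V) then s.card else 0

/-- A graph is split if its vertex set can be partitioned into two disjoint nonempty
subsets, one a clique and the other an independent set. -/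
def IsSplit {V : Type*} (Γ : SimpleGraph V) : Prop :=
  ∃ K I : Set V, K.Nonempty ∧ I.Nonempty ∧ Disjoint K I ∧ K ∪ I = Set.univ ∧
    Γ.IsClique K ∧ IsIndepSet Γ I

open Finset

lemma pcg_adj_iff {G : Type*} [Monoid G] {g h : G} :
    (primeCoprimeGraph G).Adj g h ↔ g ≠ h ∧
      (Nat.gcd (orderOf g) (orderOf h) = 1 ∨ (Nat.gcd (orderOf g) (orderOf h)).Prime) :=
  Iff.rfl

lemma card_orderOf_dvd' {α : Type*} [Group α] [Fintype α] [IsCyclic α] [DecidableEq α] {d : ℕ}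
    (hd : d ∣ Fintype.card α) (hd0 : d ≠ 0) :
    (Finset.univ.filter fun a : α => orderOf a ∣ d).card = d := by
  have h := sum_card_orderOf_eq_card_pow_eq_one (G := α) hd0
  have hset : (Finset.univ.filter fun a : α => a ^ d = 1)
      = (Finset.univ.filter fun a : α => orderOf a ∣ d) := by
    simp [orderOf_dvd_iff_pow_eq_one]
  rw [hset] at h
  rw [← h,
    Finset.sum_congr rfl fun m hm =>
      IsCyclic.card_orderOf_eq_totient ((Nat.mem_divisors.mp hm).1.trans hd)]
  exact Nat.sum_totient d

section NT
variable {p q b d : ℕ} (hp : p.Prime) (hq : q.Prime) (hpq : p ≠ q)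

include hp hq hpq in
lemma key1 (hd : d ∣ p * q ^ b) : d ∣ p * q ↔ ¬ q ^ 2 ∣ d := by
  constructor
  · intro h h2
    have hqq : q ^ 2 ∣ p * q := h2.trans h
    have : q ∣ p := by
      rw [pow_two] at hqq
      exact (mul_dvd_mul_iff_right hq.pos.ne').mp hqq
    exact hpq ((Nat.prime_dvd_prime_iff_eq hq hp).mp this).symm
  · intro h2
    by_cases hpd : p ∣ d
    · obtain ⟨e, rfl⟩ := hpd
      have he : e ∣ q ^ b := (mul_dvd_mul_iff_left hp.pos.ne').mp hd
      obtain ⟨i, hi, rfl⟩ := (Nat.dvd_prime_pow hq).mp he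
      have hi1 : i ≤ 1 := by
        by_contra hgt
        exact h2 (Dvd.dvd.mul_left (pow_dvd_pow q (by omega)) p)
      exact mul_dvd_mul_left p ((pow_dvd_pow q hi1).trans (by simp))
    · have hco : Nat.Coprime d p := Nat.coprime_comm.mp ((hp.coprime_iff_not_dvd).mpr hpd)
      have hdq : d ∣ q ^ b := hco.dvd_of_dvd_mul_left hd
      obtain ⟨i, hi, rfl⟩ := (Nat.dvd_prime_pow hq).mp hdq
      have hi1 : i ≤ 1 := by
        by_contra hgt
        exact h2 (pow_dvd_pow q (by omega))
      exact ((pow_dvd_pow q hi1).trans (by simp)).trans (dvd_mul_left q p)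

include hp hq hpq in
lemma key2 (hd : d ∣ p * q ^ b) : ¬ p * q ∣ d ↔ (d ∣ q ^ b ∨ d ∣ p) := by
  constructor
  · intro h
    by_cases hpd : p ∣ d
    · have hqd : ¬ q ∣ d := fun hqd =>
        h (Nat.Coprime.mul_dvd_of_dvd_of_dvd ((Nat.coprime_primes hp hq).mpr hpq) hpd hqd)
      have hco : Nat.Coprime d (q ^ b) :=
        Nat.Coprime.pow_right b (Nat.coprime_comm.mp ((hq.coprime_iff_not_dvd).mpr hqd))
      exact Or.inr (hco.dvd_of_dvd_mul_right hd)
    · have hco : Nat.Coprime d p := Nat.coprime_comm.mp ((hp.coprime_iff_not_dvd).mpr hpd)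
      exact Or.inl (hco.dvd_of_dvd_mul_left hd)
  · rintro (h | h) hdvd
    · have : p ∣ q ^ b := ((dvd_mul_right p q).trans hdvd).trans h
      exact hpq ((Nat.prime_dvd_prime_iff_eq hp hq).mp (hp.dvd_of_dvd_pow this))
    · have : q ∣ p := ((dvd_mul_left q p).trans hdvd).trans h
      exact hpq ((Nat.prime_dvd_prime_iff_eq hq hp).mp this).symm

include hp hq hpq in
lemma key3 {g : ℕ} (hg : g ∣ p * q ^ b) (hg1 : g ≠ 1) (hgp : ¬ g.Prime) :
    q ^ 2 ∣ g ∨ p * q ∣ g := by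
  by_cases h2 : q ^ 2 ∣ g
  · exact Or.inl h2
  · right
    have hgpq : g ∣ p * q := (key1 hp hq hpq hg).mpr h2
    by_cases hpg : p ∣ g
    · obtain ⟨e, rfl⟩ := hpg
      have he : e ∣ q := (mul_dvd_mul_iff_left hp.pos.ne').mp hgpq
      rcases (Nat.dvd_prime hq).mp he with rfl | rfl
      · exact absurd hp (by simpa using hgp)
      · exact dvd_refl _
    · have hco : Nat.Coprime g p := Nat.coprime_comm.mp ((hp.coprime_iff_not_dvd).mpr hpg)
      have : g ∣ q := hco.dvd_of_dvd_mul_left hgpq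
      rcases (Nat.dvd_prime hq).mp this with rfl | rfl
      · exact absurd rfl hg1
      · exact absurd hq hgp

end NT

theorem indepNum_cyclic_pqb (n p q b : ℕ) [NeZero n] (hp : p.Prime) (hq : q.Prime)
    (hpq : p ≠ q) (hb : 2 ≤ b) (hn : n = p * q ^ b) :
    indepNum (primeCoprimeGraph (Multiplicative (ZMod n))) =
      n - min (p * q) (q ^ b + p - 1) := by
  classical
  have hcard : Fintype.card (Multiplicative (ZMod n)) = n :=
    (Fintype.card_multiplicative (ZMod n)).trans (ZMod.card n)
  have hn0 : n ≠ 0 := NeZero.ne n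
  have hq0 : q ≠ 0 := hq.pos.ne'
  have hp0 : p ≠ 0 := hp.pos.ne'
  have hqb0 : q ^ b ≠ 0 := pow_ne_zero b hq0
  have hord : ∀ x : Multiplicative (ZMod n), orderOf x ∣ p * q ^ b := by
    intro x
    have h : orderOf x ∣ Fintype.card (Multiplicative (ZMod n)) := orderOf_dvd_card
    rw [hcard] at h
    exact h.trans (dvd_of_eq hn)
  have hpq_dvd : p * q ∣ n := by rw [hn]; exact mul_dvd_mul_left p (dvd_pow_self q (by omega))
  have hqb_dvd : q ^ b ∣ n := by rw [hn]; exact dvd_mul_left _ _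
  have hp_dvd : p ∣ n := by rw [hn]; exact dvd_mul_right _ _
  have c1 : (univ.filter fun x : Multiplicative (ZMod n) => orderOf x ∣ p * q).card = p * q :=
    card_orderOf_dvd' (by rw [hcard]; exact hpq_dvd) (by positivity)
  have c2 : (univ.filter fun x : Multiplicative (ZMod n) => orderOf x ∣ q ^ b).card = q ^ b :=
    card_orderOf_dvd' (by rw [hcard]; exact hqb_dvd) hqb0
  have c3 : (univ.filter fun x : Multiplicative (ZMod n) => orderOf x ∣ p).card = p :=
    card_orderOf_dvd' (by rw [hcard]; exact hp_dvd) hp0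
  have c4 : (univ.filter fun x : Multiplicative (ZMod n) => orderOf x ∣ 1).card = 1 :=
    card_orderOf_dvd' (by rw [hcard]; exact one_dvd n) one_ne_zero
  set T1 : Finset (Multiplicative (ZMod n)) :=
    univ.filter fun x => ¬ orderOf x ∣ p * q with hT1
  set T2 : Finset (Multiplicative (ZMod n)) :=
    univ.filter fun x => p * q ∣ orderOf x with hT2
  have cT1 : T1.card = n - p * q := by
    have hc : T1 = (univ.filter fun x : Multiplicative (ZMod n) => orderOf x ∣ p * q)ᶜ := by
      rw [hT1]; ext x; simp
    rw [hc, Finset.card_compl, c1, hcard]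
  have hu2 : ((univ.filter fun x : Multiplicative (ZMod n) => orderOf x ∣ q ^ b) ∪
      (univ.filter fun x : Multiplicative (ZMod n) => orderOf x ∣ p)).card = q ^ b + p - 1 := by
    have hinter : (univ.filter fun x : Multiplicative (ZMod n) => orderOf x ∣ q ^ b) ∩
          (univ.filter fun x : Multiplicative (ZMod n) => orderOf x ∣ p)
        = (univ.filter fun x : Multiplicative (ZMod n) => orderOf x ∣ 1) := by
      ext x
      simp only [Finset.mem_inter, Finset.mem_filter, Finset.mem_univ, true_and]
      have hco : Nat.gcd (q ^ b) p = 1 :=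
        Nat.Coprime.pow_left b ((Nat.coprime_primes hq hp).mpr (Ne.symm hpq))
      constructor
      · rintro ⟨h1, h2⟩
        have := Nat.dvd_gcd h1 h2
        rwa [hco] at this
      · intro h
        rw [Nat.dvd_one] at h
        simp [h]
    have hcup := Finset.card_union_add_card_inter
      (univ.filter fun x : Multiplicative (ZMod n) => orderOf x ∣ q ^ b)
      (univ.filter fun x : Multiplicative (ZMod n) => orderOf x ∣ p)
    rw [hinter, c2, c3, c4] at hcup
    have hple : 1 ≤ p := hp.pos
    omega
  have cT2 : T2.card = n - (q ^ b + p - 1) := by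
    have hc : T2 = ((univ.filter fun x : Multiplicative (ZMod n) => orderOf x ∣ q ^ b) ∪
        (univ.filter fun x : Multiplicative (ZMod n) => orderOf x ∣ p))ᶜ := by
      rw [hT2]; ext x
      simp only [Finset.mem_filter, Finset.mem_univ, true_and, Finset.mem_compl,
        Finset.mem_union]
      have h := key2 hp hq hpq (hord x)
      tauto
    rw [hc, Finset.card_compl, hu2, hcard]
  -- independence of T1
  have hT1ind : IsIndepSet (primeCoprimeGraph (Multiplicative (ZMod n))) (T1 : Set _) := by
    intro x hx y hy hxy hadj
    simp only [hT1, Finset.coe_filter, Set.mem_setOf_eq, Finset.mem_univ, true_and] at hx hy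
    have hx2 : q ^ 2 ∣ orderOf x := by
      by_contra h; exact hx ((key1 hp hq hpq (hord x)).mpr h)
    have hy2 : q ^ 2 ∣ orderOf y := by
      by_contra h; exact hy ((key1 hp hq hpq (hord y)).mpr h)
    have hgcd : q ^ 2 ∣ Nat.gcd (orderOf x) (orderOf y) := Nat.dvd_gcd hx2 hy2
    rcases (pcg_adj_iff.mp hadj).2 with h1 | hpr
    · rw [h1] at hgcd
      have h3 := Nat.le_of_dvd one_pos hgcd
      have h4 : q ≤ q ^ 2 := Nat.le_self_pow two_ne_zero q
      have := hq.two_le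
      omega
    · have hqr : q ∣ Nat.gcd (orderOf x) (orderOf y) := (dvd_pow_self q two_ne_zero).trans hgcd
      have heq : q = Nat.gcd (orderOf x) (orderOf y) :=
        (Nat.prime_dvd_prime_iff_eq hq hpr).mp hqr
      rw [← heq] at hgcd
      have h2 : q ^ 2 ≤ q := Nat.le_of_dvd hq.pos hgcd
      have h5 : q < q ^ 2 := by
        rw [pow_two]
        nth_rewrite 1 [← mul_one q]
        exact (Nat.mul_lt_mul_left hq.pos).mpr hq.one_lt
      omega
  -- independence of T2
  have hT2ind : IsIndepSet (primeCoprimeGraph (Multiplicative (ZMod n))) (T2 : Set _) := by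
    intro x hx y hy hxy hadj
    simp only [hT2, Finset.coe_filter, Set.mem_setOf_eq, Finset.mem_univ, true_and] at hx hy
    have hgcd : p * q ∣ Nat.gcd (orderOf x) (orderOf y) := Nat.dvd_gcd hx hy
    rcases (pcg_adj_iff.mp hadj).2 with h1 | hpr
    · rw [h1] at hgcd
      have h3 := Nat.le_of_dvd one_pos hgcd
      have h4 : 2 * 2 ≤ p * q := Nat.mul_le_mul hp.two_le hq.two_le
      omega
    · have hpr' : p ∣ Nat.gcd (orderOf x) (orderOf y) := (dvd_mul_right p q).trans hgcd
      have hqr' : q ∣ Nat.gcd (orderOf x) (orderOf y) := (dvd_mul_left q p).trans hgcd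
      exact hpq (((Nat.prime_dvd_prime_iff_eq hp hpr).mp hpr').trans
        ((Nat.prime_dvd_prime_iff_eq hq hpr).mp hqr').symm)
  -- basic bounds
  have hqblt : q < q ^ b := by
    have h2 : q < q ^ 2 := by
      rw [pow_two]
      nth_rewrite 1 [← mul_one q]
      exact (Nat.mul_lt_mul_left hq.pos).mpr hq.one_lt
    exact lt_of_lt_of_le h2 (Nat.pow_le_pow_right hq.pos hb)
  have hpqlt : p * q < n := by
    rw [hn]; exact (Nat.mul_lt_mul_left hp.pos).mpr hqblt
  -- upper bound
  have hub : ∀ s : Finset (Multiplicative (ZMod n)),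
      IsIndepSet (primeCoprimeGraph (Multiplicative (ZMod n))) (s : Set _) →
      s.card ≤ n - min (p * q) (q ^ b + p - 1) := by
    intro s hs
    have hmin : min (p * q) (q ^ b + p - 1) ≤ p * q := min_le_left _ _
    rcases le_or_gt s.card 1 with h1 | h1
    · omega
    have hnonadj : ∀ x ∈ s, ∀ y ∈ s, x ≠ y →
        Nat.gcd (orderOf x) (orderOf y) ≠ 1 ∧ ¬ (Nat.gcd (orderOf x) (orderOf y)).Prime := by
      intro x hx y hy hxy
      have h : ¬ (primeCoprimeGraph (Multiplicative (ZMod n))).Adj x y :=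
        hs (Finset.mem_coe.mpr hx) (Finset.mem_coe.mpr hy) hxy
      rw [pcg_adj_iff] at h
      push_neg at h
      exact h hxy
    by_cases hall : ∀ x ∈ s, q ^ 2 ∣ orderOf x
    · have hsub : s ⊆ T1 := by
        intro x hx
        simp only [hT1, Finset.mem_filter, Finset.mem_univ, true_and]
        intro hdvd
        exact ((key1 hp hq hpq (hord x)).mp hdvd) (hall x hx)
      calc s.card ≤ T1.card := Finset.card_le_card hsub
        _ = n - p * q := cT1
        _ ≤ n - min (p * q) (q ^ b + p - 1) := Nat.sub_le_sub_left hmin n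
    · push_neg at hall
      obtain ⟨x, hx, hx2⟩ := hall
      have hkey : ∀ z ∈ s, z ≠ x → p * q ∣ orderOf x ∧ p * q ∣ orderOf z := by
        intro z hz hzx
        obtain ⟨hg1, hgp⟩ := hnonadj x hx z hz (Ne.symm hzx)
        have hgdvd : Nat.gcd (orderOf x) (orderOf z) ∣ p * q ^ b :=
          (Nat.gcd_dvd_left _ _).trans (hord x)
        rcases key3 hp hq hpq hgdvd hg1 hgp with h | h
        · exact absurd (h.trans (Nat.gcd_dvd_left _ _)) hx2
        · exact ⟨h.trans (Nat.gcd_dvd_left _ _), h.trans (Nat.gcd_dvd_right _ _)⟩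
      have hsub : s ⊆ T2 := by
        intro z hz
        simp only [hT2, Finset.mem_filter, Finset.mem_univ, true_and]
        by_cases hzx : z = x
        · subst hzx
          obtain ⟨y, hy, hyz⟩ : ∃ y ∈ s, y ≠ z := by
            obtain ⟨u, hu, v, hv, huv⟩ := Finset.one_lt_card.mp h1
            rcases eq_or_ne u z with rfl | h
            · exact ⟨v, hv, fun hh => huv hh.symm⟩
            · exact ⟨u, hu, h⟩
          exact (hkey y hy hyz).1
        · exact (hkey z hz hzx).2
      calc s.card ≤ T2.card := Finset.card_le_card hsub
        _ = n - (q ^ b + p - 1) := cT2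
        _ ≤ n - min (p * q) (q ^ b + p - 1) :=
            Nat.sub_le_sub_left (min_le_right _ _) n
  apply le_antisymm
  · rw [indepNum]
    apply Finset.sup_le
    intro s _
    split_ifs with h
    · exact hub s h
    · exact Nat.zero_le _
  · have hle1 : T1.card ≤ indepNum (primeCoprimeGraph (Multiplicative (ZMod n))) := by
      rw [indepNum]
      have := Finset.le_sup (f := fun s : Finset (Multiplicative (ZMod n)) =>
        if IsIndepSet (primeCoprimeGraph (Multiplicative (ZMod n))) (s : Set _)
          then s.card else 0) (Finset.mem_univ T1)
      simp only [if_pos hT1ind] at this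
      exact this
    have hle2 : T2.card ≤ indepNum (primeCoprimeGraph (Multiplicative (ZMod n))) := by
      rw [indepNum]
      have := Finset.le_sup (f := fun s : Finset (Multiplicative (ZMod n)) =>
        if IsIndepSet (primeCoprimeGraph (Multiplicative (ZMod n))) (s : Set _)
          then s.card else 0) (Finset.mem_univ T2)
      simp only [if_pos hT2ind] at this
      exact this
    rw [cT1] at hle1
    rw [cT2] at hle2
    omega
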